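/- Let $\alpha \in (0,1)$, $T > 0$, $\delta \ge 1$, and consider the graded mesh. There exists a constant $C > 0$, depending only on $\alpha$, $\delta$ and $T$, such that for every $N \ge 2$ and every integer $j$ with $1 \le j \le N-1$: $\tau_{j+1}^{3}\; t_j^{\,\alpha-2} \le C\, j^{\,\delta(\alpha+1)-3}\; N^{-\delta(\alpha+1)}.$ -/

import Mathlib

/-- Mean value theorem bound: `(x+1)^δ - x^δ ≤ δ * 2^(δ-1) * x^(δ-1)` for `x ≥ 1`. -/
lemma graded_mesh_mvt_aux (δ : ℝ) (hδ : 1 ≤ δ) {x : ℝ} (hx : 1 ≤ x) :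
    (x + 1) ^ δ - x ^ δ ≤ δ * (2 : ℝ) ^ (δ - 1) * x ^ (δ - 1) := by
  have hx0 : (0 : ℝ) < x := lt_of_lt_of_le one_pos hx
  have hδ0 : (0 : ℝ) ≤ δ := le_trans zero_le_one hδ
  obtain ⟨c, hc, hceq⟩ := exists_hasDerivAt_eq_slope (fun y => y ^ δ)
      (fun y => δ * y ^ (δ - 1)) (a := x) (b := x + 1) (by linarith)
      ((continuous_id.rpow_const (fun y => Or.inr hδ0)).continuousOn)
      (fun y hy => Real.hasDerivAt_rpow_const (Or.inr hδ))
  have hc0 : 0 ≤ c := le_of_lt (lt_of_lt_of_le hx0 (le_of_lt hc.1))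
  have hcle : c ≤ 2 * x := by nlinarith [hc.2]
  have h1 : (x + 1) ^ δ - x ^ δ = δ * c ^ (δ - 1) := by
    rw [hceq]; ring_nf
  rw [h1]
  have h2 : c ^ (δ - 1) ≤ (2 * x) ^ (δ - 1) :=
    Real.rpow_le_rpow hc0 hcle (by linarith)
  have h3 : (2 * x) ^ (δ - 1) = (2 : ℝ) ^ (δ - 1) * x ^ (δ - 1) :=
    Real.mul_rpow (by norm_num) (le_of_lt hx0)
  calc δ * c ^ (δ - 1) ≤ δ * ((2 : ℝ) ^ (δ - 1) * x ^ (δ - 1)) := by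
        rw [← h3]; exact mul_le_mul_of_nonneg_left h2 hδ0
    _ = δ * (2 : ℝ) ^ (δ - 1) * x ^ (δ - 1) := by ring

/-- On the graded mesh there is a constant `C > 0`, depending only on `α`, `δ`, `T`,
such that `τ (j+1) ^ 3 * t j ^ (α-2) ≤ C * j^(δ(α+1)-3) * N^(-δ(α+1))`
for all `N ≥ 2` and `1 ≤ j ≤ N - 1`. -/
theorem graded_mesh_cubic_step_bound
    (α T δ : ℝ) (hα : α ∈ Set.Ioo (0 : ℝ) 1) (hT : 0 < T) (hδ : 1 ≤ δ) :
    ∃ C : ℝ, 0 < C ∧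
      ∀ (N : ℕ), 2 ≤ N →
        ∀ (t τ : ℕ → ℝ), (∀ m, t m = T * ((m : ℝ) / (N : ℝ)) ^ δ) →
          (∀ m, 1 ≤ m → τ m = t m - t (m - 1)) →
          ∀ j, 1 ≤ j → j ≤ N - 1 →
            τ (j + 1) ^ 3 * t j ^ (α - 2) ≤
              C * (j : ℝ) ^ (δ * (α + 1) - 3) * (N : ℝ) ^ (-(δ * (α + 1))) := by
  have h2 : (0 : ℝ) < 2 := by norm_num
  have hδ0 : (0 : ℝ) < δ := lt_of_lt_of_le one_pos hδ
  refine ⟨T ^ (α + 1) * δ ^ 3 * (2 : ℝ) ^ (3 * (δ - 1)), by positivity, ?_⟩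
  intro N hN t τ ht hτ j hj hjN
  have hNr : (0 : ℝ) < (N : ℝ) := by positivity
  have hjr : (1 : ℝ) ≤ (j : ℝ) := by exact_mod_cast hj
  have hjr0 : (0 : ℝ) < (j : ℝ) := lt_of_lt_of_le one_pos hjr
  set jr := (j : ℝ)
  set Nr := (N : ℝ)
  -- step expression
  have hτval : τ (j + 1) = T * ((jr + 1) ^ δ - jr ^ δ) / Nr ^ δ := by
    rw [hτ (j + 1) (by omega)]
    simp only [Nat.add_sub_cancel, ht]
    have : ((j + 1 : ℕ) : ℝ) = jr + 1 := by push_cast [jr]; ring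
    rw [this, Real.div_rpow (by linarith) (le_of_lt hNr),
      Real.div_rpow (by linarith) (le_of_lt hNr)]
    ring
  have hA : τ (j + 1) ≤ T * (δ * (2 : ℝ) ^ (δ - 1)) * jr ^ (δ - 1) / Nr ^ δ := by
    rw [hτval]
    have := graded_mesh_mvt_aux δ hδ hjr
    have hNd : (0 : ℝ) < Nr ^ δ := Real.rpow_pos_of_pos hNr δ
    rw [div_le_div_iff₀ hNd hNd]
    have hT' := le_of_lt hT
    nlinarith [Real.rpow_pos_of_pos hNr δ, mul_le_mul_of_nonneg_left this hT']
  have hτ0 : 0 ≤ τ (j + 1) := by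
    rw [hτval]
    have h : jr ^ δ ≤ (jr + 1) ^ δ :=
      Real.rpow_le_rpow (by linarith) (by linarith) (le_of_lt hδ0)
    apply div_nonneg (mul_nonneg hT.le (by linarith)) (Real.rpow_pos_of_pos hNr δ).le
  have htval : t j = T * (jr / Nr) ^ δ := ht j
  have htpos : 0 < t j := by
    rw [htval]; positivity
  -- bound the cube
  have hcube : τ (j + 1) ^ 3 ≤ (T * (δ * (2 : ℝ) ^ (δ - 1)) * jr ^ (δ - 1) / Nr ^ δ) ^ 3 :=
    pow_le_pow_left₀ hτ0 hA 3
  have hstep : τ (j + 1) ^ 3 * t j ^ (α - 2) ≤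
      (T * (δ * (2 : ℝ) ^ (δ - 1)) * jr ^ (δ - 1) / Nr ^ δ) ^ 3 * t j ^ (α - 2) :=
    mul_le_mul_of_nonneg_right hcube (le_of_lt (Real.rpow_pos_of_pos htpos _))
  refine le_trans hstep (le_of_eq ?_)
  -- now an exact computation
  rw [htval]
  have hd0 : (0 : ℝ) ≤ jr / Nr := by positivity
  rw [Real.mul_rpow (le_of_lt hT) (Real.rpow_nonneg hd0 δ),
    ← Real.rpow_mul hd0, Real.div_rpow hjr0.le (le_of_lt hNr)]
  rw [div_pow, mul_pow, mul_pow, mul_pow]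
  rw [← Real.rpow_natCast (jr ^ (δ - 1)) 3, ← Real.rpow_mul hjr0.le,
    ← Real.rpow_natCast (Nr ^ δ) 3, ← Real.rpow_mul hNr.le,
    ← Real.rpow_natCast ((2 : ℝ) ^ (δ - 1)) 3, ← Real.rpow_mul (by norm_num : (0:ℝ) ≤ 2),
    ← Real.rpow_natCast T 3]
  push_cast
  have hjne : ∀ a : ℝ, jr ^ a ≠ 0 := fun a => (Real.rpow_pos_of_pos hjr0 a).ne'
  have hNne : ∀ a : ℝ, Nr ^ a ≠ 0 := fun a => (Real.rpow_pos_of_pos hNr a).ne'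
  rw [Real.rpow_neg hNr.le]
  field_simp
  simp only [Real.rpow_def_of_pos hT, Real.rpow_def_of_pos hjr0,
    Real.rpow_def_of_pos hNr, Real.rpow_def_of_pos h2]
  ring_nf
  simp only [mul_assoc, ← Real.exp_add]
  rw [Real.exp_eq_exp]
  ring
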